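/- arXiv:1705.01349 — 4 statements merged into one kernel-verified Lean document; each statement's English description precedes it below -/
import Mathlib

section
/- Let 1 ≤ p < ∞, f ∈ L^p(ℝ^n), R > 0 and y ∈ ℝ^n nonzero. Then for every natural number N, ‖f·χ_{B_R(0)}‖_p ≤ N·sup_{|w|≤|y|} ‖T_w f − f‖_p + ‖f·χ_{B_R(−Ny)}‖_p. -/
open MeasureTheory Metric Set
open scoped ENNReal

/-- The iterated translation estimate:
`‖f·χ_{B_R(0)}‖_p ≤ N · sup_{|w| ≤ |y|} ‖T_w f − f‖_p + ‖f·χ_{B_R(−N y)}‖_p`. -/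
theorem norm_ball_le_iterated_translate {n : ℕ} (p : ℝ≥0∞) (hp : 1 ≤ p) (hp' : p ≠ ⊤)
    (f : EuclideanSpace ℝ (Fin n) → ℝ) (hf : MemLp f p volume)
    (R : ℝ) (hR : 0 < R) (y : EuclideanSpace ℝ (Fin n)) (hy : y ≠ 0) (N : ℕ) :
    eLpNorm ((ball (0 : EuclideanSpace ℝ (Fin n)) R).indicator f) p volume ≤
      (N : ℝ≥0∞) *
          (⨆ w : {w : EuclideanSpace ℝ (Fin n) // ‖w‖ ≤ ‖y‖},
            eLpNorm (fun x => f (x - w.1) - f x) p volume) +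
        eLpNorm ((ball (-(N • y)) R).indicator f) p volume := by
  set S := (⨆ w : {w : EuclideanSpace ℝ (Fin n) // ‖w‖ ≤ ‖y‖},
      eLpNorm (fun x => f (x - w.1) - f x) p volume) with hS
  have hfm : AEStronglyMeasurable f volume := hf.1
  -- single-step estimate
  have step : ∀ c : EuclideanSpace ℝ (Fin n),
      eLpNorm ((ball c R).indicator f) p volume ≤
        S + eLpNorm ((ball (c - y) R).indicator f) p volume := by
    intro c
    have hmp : MeasurePreserving (fun z : EuclideanSpace ℝ (Fin n) => z + y) volume volume :=
      measurePreserving_add_right volume y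
    have hindm : AEStronglyMeasurable ((ball c R).indicator f) volume :=
      hfm.indicator measurableSet_ball
    have h1 : eLpNorm ((ball c R).indicator f) p volume
        = eLpNorm (fun z => (ball c R).indicator f (z + y)) p volume :=
      (eLpNorm_comp_measurePreserving hindm hmp).symm
    have h2 : (fun z => (ball c R).indicator f (z + y))
        = (ball (c - y) R).indicator (fun z => f (z + y)) := by
      funext z
      have key : z + y ∈ ball c R ↔ z ∈ ball (c - y) R := by
        have hzz : z + y - c = z - (c - y) := by abel
        simp [mem_ball, dist_eq_norm, hzz]
      by_cases hz : z ∈ ball (c - y) R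
      · simp [indicator_of_mem hz, indicator_of_mem (key.mpr hz)]
      · simp [indicator_of_notMem hz, indicator_of_notMem (fun h => hz (key.mp h))]
    have h3 : (ball (c - y) R).indicator (fun z => f (z + y))
        = (fun z => (ball (c - y) R).indicator (fun z => f (z + y) - f z) z
            + (ball (c - y) R).indicator f z) := by
      funext z
      by_cases hz : z ∈ ball (c - y) R <;>
        simp [indicator_of_mem, indicator_of_notMem, hz]
    have hg1 : AEStronglyMeasurable
        ((ball (c - y) R).indicator (fun z => f (z + y) - f z)) volume := by
      refine AEStronglyMeasurable.indicator ?_ measurableSet_ball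
      exact (hfm.comp_measurePreserving hmp).sub hfm
    have hg2 : AEStronglyMeasurable ((ball (c - y) R).indicator f) volume :=
      hfm.indicator measurableSet_ball
    calc eLpNorm ((ball c R).indicator f) p volume
        = eLpNorm ((ball (c - y) R).indicator (fun z => f (z + y))) p volume := by
            rw [h1, h2]
      _ ≤ eLpNorm ((ball (c - y) R).indicator (fun z => f (z + y) - f z)) p volume
            + eLpNorm ((ball (c - y) R).indicator f) p volume := by
            rw [h3]; exact eLpNorm_add_le hg1 hg2 hp
      _ ≤ S + eLpNorm ((ball (c - y) R).indicator f) p volume := by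
            gcongr
            calc eLpNorm ((ball (c - y) R).indicator (fun z => f (z + y) - f z)) p volume
                ≤ eLpNorm (fun z => f (z + y) - f z) p volume := eLpNorm_indicator_le _
              _ = eLpNorm (fun z => f (z - (-y)) - f z) p volume := by
                  simp [sub_neg_eq_add]
              _ ≤ S := le_iSup (fun w : {w : EuclideanSpace ℝ (Fin n) // ‖w‖ ≤ ‖y‖} =>
                    eLpNorm (fun x => f (x - w.1) - f x) p volume)
                    ⟨-y, by simp⟩
  induction N with
  | zero => simp
  | succ N ih =>
    have h := step (-(N • y))
    have hc : -(N • y) - y = -((N + 1) • y) := by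
      rw [succ_nsmul, neg_add, sub_eq_add_neg]
    rw [hc] at h
    calc eLpNorm ((ball (0 : EuclideanSpace ℝ (Fin n)) R).indicator f) p volume
        ≤ (N : ℝ≥0∞) * S + eLpNorm ((ball (-(N • y)) R).indicator f) p volume := ih
      _ ≤ (N : ℝ≥0∞) * S + (S + eLpNorm ((ball (-((N + 1) • y)) R).indicator f) p volume) := by
          gcongr
      _ = ((N + 1 : ℕ) : ℝ≥0∞) * S + eLpNorm ((ball (-((N + 1) • y)) R).indicator f) p volume := by
          push_cast
          ring
end

section
/- Let p and q be conjugate exponents with 1 ≤ p < ∞, let φ ∈ L^q(ℝ^n) have compact support, and additionally assume φ is continuous if p = 1. Let K ⊂ ℝ^n be compact. Then the linear map Φ: L^p(K) → L^p(ℝ^n) given by Φf = φ * f (convolution) is a compact operator. -/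
set_option maxHeartbeats 1000000

open MeasureTheory Metric Set Pointwise Filter
open scoped ENNReal

namespace ConvCompactAux

noncomputable section

variable {n : ℕ}

local notation "𝔼" => EuclideanSpace ℝ (Fin n)

lemma one_div_one_eq {p q : ℝ≥0∞} (hpq : 1 / p + 1 / q = 1) :
    (1 : ℝ≥0∞) / 1 = 1 / q + 1 / p := by
  rw [div_one, add_comm (1/q) (1/p)]; exact hpq.symm

lemma integrable_mul' {p q : ℝ≥0∞} (hpq : 1 / p + 1 / q = 1) {φ f : 𝔼 → ℝ}
    (hφ : MemLp φ q volume) (hf : MemLp f p volume) :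
    Integrable (fun t => φ t * f t) volume := by
  haveI : ENNReal.HolderTriple q p 1 := ⟨by rw [inv_one, add_comm]; simpa [one_div] using hpq⟩
  have h2 := hf.smul (r := 1) hφ
  rw [← memLp_one_iff_integrable]
  exact h2

lemma holder' {p q : ℝ≥0∞} (hpq : 1 / p + 1 / q = 1) {φ f : 𝔼 → ℝ}
    (hφ : AEStronglyMeasurable φ volume) (hf : AEStronglyMeasurable f volume) :
    eLpNorm (fun t => φ t * f t) 1 volume ≤ eLpNorm φ q volume * eLpNorm f p volume := by
  haveI : ENNReal.HolderTriple q p 1 := ⟨by rw [inv_one, add_comm]; simpa [one_div] using hpq⟩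
  have h := eLpNorm_le_eLpNorm_mul_eLpNorm'_of_norm hφ hf (· * ·) 1
    (Filter.Eventually.of_forall fun x => by simp [norm_mul]) (p := q) (q := p) (r := 1)
  simpa using h

lemma memc {p : ℝ≥0∞} {f : 𝔼 → ℝ} (hf : MemLp f p volume) (x : 𝔼) :
    MemLp (fun t => f (x - t)) p volume :=
  hf.comp_measurePreserving (Measure.measurePreserving_sub_left volume x)

lemma memtr {p : ℝ≥0∞} {f : 𝔼 → ℝ} (hf : MemLp f p volume) (v : 𝔼) :
    MemLp (fun t => f (t - v)) p volume :=
  hf.comp_measurePreserving (measurePreserving_sub_right volume v)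

lemma eLpNorm_comp_sub_left {p : ℝ≥0∞} {f : 𝔼 → ℝ}
    (hf : AEStronglyMeasurable f volume) (x : 𝔼) :
    eLpNorm (fun t => f (x - t)) p volume = eLpNorm f p volume :=
  eLpNorm_comp_measurePreserving hf (Measure.measurePreserving_sub_left volume x)

lemma lintegral_norm_eq_eLpNorm_one (h : 𝔼 → ℝ) :
    (∫⁻ t, ENNReal.ofReal ‖h t‖) = eLpNorm h 1 volume := by
  rw [eLpNorm_one_eq_lintegral_enorm]
  congr 1
  funext t
  rw [ofReal_norm]

/-- Pointwise Hölder bound for the convolution value. -/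
lemma conv_val_bound {p q : ℝ≥0∞} (hpq : 1 / p + 1 / q = 1) {φ f : 𝔼 → ℝ}
    (hφ : MemLp φ q volume) (hf : MemLp f p volume) (x : 𝔼) :
    |∫ t, φ t * f (x - t)| ≤ (eLpNorm φ q volume * eLpNorm f p volume).toReal := by
  rw [← Real.norm_eq_abs]
  refine (norm_integral_le_lintegral_norm _).trans ?_
  rw [lintegral_norm_eq_eLpNorm_one]
  refine ENNReal.toReal_mono
    (ENNReal.mul_ne_top hφ.eLpNorm_ne_top hf.eLpNorm_ne_top) ?_
  have h := holder' (φ := φ) (f := fun t => f (x - t)) hpq hφ.1 (memc hf x).1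
  rwa [eLpNorm_comp_sub_left hf.1 x] at h

/-- Difference of convolution values, controlled by the translation of `φ`. -/
lemma conv_diff_bound {p q : ℝ≥0∞} (hpq : 1 / p + 1 / q = 1) {φ f : 𝔼 → ℝ}
    (hφ : MemLp φ q volume) (hf : MemLp f p volume) (x y : 𝔼) :
    |(∫ t, φ t * f (x - t)) - ∫ t, φ t * f (y - t)| ≤
      (eLpNorm (fun t => φ t - φ (t - (x - y))) q volume * eLpNorm f p volume).toReal := by
  set v := x - y with hv
  have hfx : MemLp (fun t => f (x - t)) p volume := memc hf x
  have hφv : MemLp (fun t => φ (t - v)) q volume := memtr hφ v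
  have hint1 : Integrable (fun t => φ t * f (x - t)) volume := integrable_mul' hpq hφ hfx
  have hint2 : Integrable (fun t => φ (t - v) * f (x - t)) volume :=
    integrable_mul' hpq hφv hfx
  have hswap : ∫ t, φ (t - v) * f (x - t) = ∫ t, φ t * f (y - t) := by
    have h1 : (fun t => φ (t - v) * f (x - t))
        = fun t => φ (t - v) * f (y - (t - v)) := by
      funext t
      have : y - (t - v) = x - t := by rw [hv]; abel
      rw [this]
    rw [h1]
    exact integral_sub_right_eq_self (fun t => φ t * f (y - t)) v
  have hdiff : (∫ t, φ t * f (x - t)) - ∫ t, φ t * f (y - t)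
      = ∫ t, (φ t - φ (t - v)) * f (x - t) := by
    rw [← hswap, ← integral_sub hint1 hint2]
    congr 1
    funext t
    ring
  rw [hdiff, ← Real.norm_eq_abs]
  refine (norm_integral_le_lintegral_norm _).trans ?_
  rw [lintegral_norm_eq_eLpNorm_one]
  refine ENNReal.toReal_mono
    (ENNReal.mul_ne_top (hφ.sub hφv).eLpNorm_ne_top hf.eLpNorm_ne_top) ?_
  have h := holder' (φ := fun t => φ t - φ (t - v)) (f := fun t => f (x - t)) hpq
    (hφ.1.sub hφv.1) (memc hf x).1
  rwa [eLpNorm_comp_sub_left hf.1 x] at h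

/-- Continuity of translation in `L^q`, with a compactly supported kernel
(continuous when `q = ∞`). -/
lemma translation_small {p q : ℝ≥0∞} (hpq : 1 / p + 1 / q = 1)
    {φ : 𝔼 → ℝ} (hφ : MemLp φ q volume) (hφsupp : HasCompactSupport φ)
    (hφc : p = 1 → Continuous φ) {η : ℝ} (hη : 0 < η) :
    ∃ δ > 0, ∀ v : 𝔼, ‖v‖ < δ →
      eLpNorm (fun t => φ t - φ (t - v)) q volume ≤ ENNReal.ofReal η := by
  have hq1 : 1 ≤ q := by
    have h1 : 1 / q ≤ 1 / p + 1 / q := le_add_self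
    rw [hpq] at h1
    rwa [one_div, ENNReal.inv_le_one] at h1
  have hq0 : q ≠ 0 := (zero_lt_one.trans_le hq1).ne'
  by_cases hqtop : q = ⊤
  · -- q = ∞, so p = 1 and φ is continuous
    have hp1 : p = 1 := by
      rw [hqtop] at hpq
      simp only [ENNReal.div_top, add_zero] at hpq
      rwa [one_div, ENNReal.inv_eq_one] at hpq
    have hcont : Continuous φ := hφc hp1
    have huc : UniformContinuous φ :=
      hφsupp.uniformContinuous_of_continuous hcont
    rw [Metric.uniformContinuous_iff] at huc
    obtain ⟨δ, hδ, hball⟩ := huc η hη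
    refine ⟨δ, hδ, fun v hv => ?_⟩
    rw [hqtop, eLpNorm_exponent_top]
    refine eLpNormEssSup_le_of_ae_bound (C := η) ?_
    filter_upwards with t
    have hd : dist t (t - v) < δ := by
      rw [dist_eq_norm, sub_sub_cancel]; exact hv
    have := hball hd
    rw [Real.dist_eq] at this
    rw [Real.norm_eq_abs]
    exact this.le
  · -- q < ∞ : use density of compactly supported continuous functions
    obtain ⟨g, g_supp, hg_close, g_cont, g_mem⟩ :=
      hφ.exists_hasCompactSupport_eLpNorm_sub_le hqtop
        (ε := ENNReal.ofReal (η/3)) (ne_of_gt (ENNReal.ofReal_pos.2 (by positivity)))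
    set D := cthickening 1 (tsupport g) with hD_def
    have hD : IsCompact D := g_supp.cthickening
    set A := volume D ^ (1 / q.toReal) with hA_def
    have hA : A ≠ ⊤ :=
      ENNReal.rpow_ne_top_of_nonneg (by positivity) hD.measure_lt_top.ne
    set κ := (η/3) / (A.toReal + 1) with hκ_def
    have hκ : 0 < κ := by positivity
    have hbound : ENNReal.ofReal κ * A ≤ ENNReal.ofReal (η/3) := by
      calc ENNReal.ofReal κ * A = ENNReal.ofReal κ * ENNReal.ofReal A.toReal := by
            rw [ENNReal.ofReal_toReal hA]
        _ = ENNReal.ofReal (κ * A.toReal) := (ENNReal.ofReal_mul hκ.le).symm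
        _ ≤ ENNReal.ofReal (η/3) := by
            refine ENNReal.ofReal_le_ofReal ?_
            have h1 : κ * (A.toReal + 1) = η/3 := by
              rw [hκ_def]; field_simp
            nlinarith [hκ.le, ENNReal.toReal_nonneg (a := A)]
    have huc : UniformContinuous g := g_supp.uniformContinuous_of_continuous g_cont
    rw [Metric.uniformContinuous_iff] at huc
    obtain ⟨δ₀, hδ₀, hball⟩ := huc κ hκ
    refine ⟨min δ₀ 1, lt_min hδ₀ zero_lt_one, fun v hv => ?_⟩
    have hv₀ : ‖v‖ < δ₀ := hv.trans_le (min_le_left _ _)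
    have hv₁ : ‖v‖ ≤ 1 := (hv.trans_le (min_le_right _ _)).le
    -- middle term
    have hmid : eLpNorm (fun t => g t - g (t - v)) q volume ≤ ENNReal.ofReal (η/3) := by
      have hptw : ∀ t, ‖g t - g (t - v)‖ ≤ ‖D.indicator (fun _ => κ) t‖ := by
        intro t
        by_cases htD : t ∈ D
        · rw [indicator_of_mem htD, Real.norm_eq_abs κ, abs_of_pos hκ, Real.norm_eq_abs]
          have hd : dist t (t - v) < δ₀ := by
            rw [dist_eq_norm, sub_sub_cancel]; exact hv₀
          have := hball hd
          rw [Real.dist_eq] at this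
          exact this.le
        · have h1 : g t = 0 :=
            image_eq_zero_of_notMem_tsupport (fun h => htD (self_subset_cthickening _ h))
          have h2 : g (t - v) = 0 := by
            by_contra h
            refine htD ?_
            refine mem_cthickening_of_dist_le t (t - v) 1 _ (subset_tsupport g h) ?_
            rw [dist_eq_norm, sub_sub_cancel]
            exact hv₁
          rw [h1, h2, sub_zero]
          simp [norm_nonneg]
      refine le_trans (eLpNorm_mono hptw) ?_
      refine le_trans (eLpNorm_indicator_const_le _ _) ?_
      rw [Real.enorm_eq_ofReal hκ.le]
      exact hbound
    -- translated third term
    have hgv_asm : AEStronglyMeasurable (fun t => g (t - v)) volume :=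
      (g_cont.comp (continuous_id.sub continuous_const)).aestronglyMeasurable
    have hφv_asm : AEStronglyMeasurable (fun t => φ (t - v)) volume :=
      hφ.1.comp_measurePreserving (measurePreserving_sub_right volume v)
    have hright : eLpNorm (fun t => g (t - v) - φ (t - v)) q volume
        = eLpNorm (fun t => φ t - g t) q volume := by
      have e1 : eLpNorm ((fun t => g t - φ t) ∘ (fun t => t - v)) q volume
          = eLpNorm (fun t => g t - φ t) q volume :=
        eLpNorm_comp_measurePreserving (g_cont.aestronglyMeasurable.sub hφ.1)
          (measurePreserving_sub_right volume v)
      have e2 : (fun t => g (t - v) - φ (t - v))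
          = (fun t => g t - φ t) ∘ (fun t => t - v) := rfl
      rw [e2, e1]
      exact eLpNorm_sub_comm g φ q volume
    have decomp : (fun t => φ t - φ (t - v))
        = (fun t => φ t - g t) + ((fun t => g t - g (t - v))
            + fun t => g (t - v) - φ (t - v)) := by
      funext t
      simp only [Pi.add_apply]
      ring
    rw [decomp]
    have step1 : eLpNorm ((fun t => φ t - g t) + ((fun t => g t - g (t - v))
          + fun t => g (t - v) - φ (t - v))) q volume
        ≤ eLpNorm (fun t => φ t - g t) q volume
          + eLpNorm ((fun t => g t - g (t - v)) + fun t => g (t - v) - φ (t - v)) q volume :=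
      eLpNorm_add_le (hφ.1.sub g_cont.aestronglyMeasurable)
        ((g_cont.aestronglyMeasurable.sub hgv_asm).add (hgv_asm.sub hφv_asm)) hq1
    refine step1.trans ?_
    have step2 : eLpNorm ((fun t => g t - g (t - v)) + fun t => g (t - v) - φ (t - v)) q volume
        ≤ eLpNorm (fun t => g t - g (t - v)) q volume
          + eLpNorm (fun t => g (t - v) - φ (t - v)) q volume :=
      eLpNorm_add_le (g_cont.aestronglyMeasurable.sub hgv_asm)
        (hgv_asm.sub hφv_asm) hq1
    have hfirst : eLpNorm (fun t => φ t - g t) q volume ≤ ENNReal.ofReal (η/3) := hg_close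
    have hthird : eLpNorm (fun t => g (t - v) - φ (t - v)) q volume
        ≤ ENNReal.ofReal (η/3) := by rw [hright]; exact hfirst
    calc eLpNorm (fun t => φ t - g t) q volume
          + eLpNorm ((fun t => g t - g (t - v)) + fun t => g (t - v) - φ (t - v)) q volume
        ≤ ENNReal.ofReal (η/3)
          + (ENNReal.ofReal (η/3) + ENNReal.ofReal (η/3)) :=
          add_le_add hfirst (step2.trans (add_le_add hmid hthird))
      _ = ENNReal.ofReal η := by
          rw [← ENNReal.ofReal_add (by positivity) (by positivity),
            ← ENNReal.ofReal_add (by positivity) (by positivity)]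
          congr 1
          ring

/-- A single convolution-difference estimate. -/
lemma diff_le_eta {p q : ℝ≥0∞} (hpq : 1 / p + 1 / q = 1) {φ f : 𝔼 → ℝ}
    (hφ : MemLp φ q volume) (hf : MemLp f p volume)
    (hf1 : eLpNorm f p volume ≤ 1) {η : ℝ} (hη : 0 ≤ η) {x y : 𝔼}
    (hδ : eLpNorm (fun t => φ t - φ (t - (x - y))) q volume ≤ ENNReal.ofReal η) :
    |(∫ t, φ t * f (x - t)) - ∫ t, φ t * f (y - t)| ≤ η := by
  refine (conv_diff_bound hpq hφ hf x y).trans ?_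
  have h1 : eLpNorm (fun t => φ t - φ (t - (x - y))) q volume * eLpNorm f p volume
      ≤ ENNReal.ofReal η * 1 := mul_le_mul' hδ hf1
  calc (eLpNorm (fun t => φ t - φ (t - (x - y))) q volume * eLpNorm f p volume).toReal
      ≤ (ENNReal.ofReal η * 1).toReal := ENNReal.toReal_mono (by simp) h1
    _ = η := by simp [ENNReal.toReal_ofReal hη]

end

end ConvCompactAux

open ConvCompactAux

/-- Convolution with a compactly supported `L^q` kernel (continuous if `p = 1`)
is a compact operator from `L^p(K)` to `L^p(ℝⁿ)`: the image of the unit ball of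
`L^p(K)` is totally bounded in the `L^p` metric. -/
theorem convolution_compact_operator {n : ℕ} (p q : ℝ≥0∞) (hp : 1 ≤ p) (hp' : p ≠ ⊤)
    (hpq : 1 / p + 1 / q = 1)
    (φ : EuclideanSpace ℝ (Fin n) → ℝ) (hφ : MemLp φ q volume)
    (hφsupp : HasCompactSupport φ) (hφc : p = 1 → Continuous φ)
    (K : Set (EuclideanSpace ℝ (Fin n))) (hK : IsCompact K) :
    ∀ ε > (0 : ℝ), ∃ G : Finset (EuclideanSpace ℝ (Fin n) → ℝ),
      ∀ f : EuclideanSpace ℝ (Fin n) → ℝ, MemLp f p volume →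
        (∀ x ∉ K, f x = 0) → eLpNorm f p volume ≤ 1 →
          ∃ g ∈ G,
            eLpNorm ((fun x => ∫ t, φ t * f (x - t)) - g) p volume < ENNReal.ofReal ε := by
  classical
  intro ε hε
  -- the common compact support of all convolutions
  set C : Set (EuclideanSpace ℝ (Fin n)) := tsupport φ + K with hC_def
  have hC : IsCompact C := IsCompact.add hφsupp hK
  -- all convolutions of admissible functions vanish outside C
  have hsupp : ∀ f : EuclideanSpace ℝ (Fin n) → ℝ, (∀ x ∉ K, f x = 0) → ∀ x ∉ C,
      (∫ t, φ t * f (x - t)) = 0 := by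
    intro f hfK x hx
    have hzero : (fun t => φ t * f (x - t)) = fun _ => (0 : ℝ) := by
      funext t
      by_cases hφt : φ t = 0
      · rw [hφt, zero_mul]
      · by_cases hft : f (x - t) = 0
        · rw [hft, mul_zero]
        · exfalso
          refine hx ?_
          have h1 : t ∈ tsupport φ := subset_tsupport φ hφt
          have h2 : x - t ∈ K := by
            by_contra h
            exact hft (hfK _ h)
          have := add_mem_add h1 h2
          rwa [add_sub_cancel] at this
    rw [hzero, integral_zero]
  -- quantitative setup
  set A : ℝ≥0∞ := volume C ^ (1 / p.toReal) with hA_def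
  have hA : A ≠ ⊤ :=
    ENNReal.rpow_ne_top_of_nonneg (by positivity) hC.measure_lt_top.ne
  set η : ℝ := ε / (3 * (A.toReal + 1)) with hη_def
  have hη : 0 < η := by positivity
  -- final estimate: small uniformly bounded functions supported in C are L^p-small
  have hfinal : ∀ u : EuclideanSpace ℝ (Fin n) → ℝ, (∀ x, ‖u x‖ ≤ 3 * η) → (∀ x ∉ C, u x = 0) →
      eLpNorm u p volume < ENNReal.ofReal ε := by
    intro u hb hz
    have hmono : ∀ x, ‖u x‖ ≤ ‖C.indicator (fun _ => 3 * η) x‖ := by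
      intro x
      by_cases hx : x ∈ C
      · rw [indicator_of_mem hx]
        exact (hb x).trans (by rw [Real.norm_eq_abs]; exact le_abs_self _)
      · rw [hz x hx]; simp
    refine lt_of_le_of_lt ((eLpNorm_mono hmono).trans (eLpNorm_indicator_const_le _ _)) ?_
    rw [Real.enorm_eq_ofReal (by positivity : (0:ℝ) ≤ 3 * η)]
    calc ENNReal.ofReal (3 * η) * volume C ^ (1 / p.toReal)
        = ENNReal.ofReal (3 * η) * ENNReal.ofReal A.toReal := by
          rw [hA_def, ENNReal.ofReal_toReal hA]
      _ = ENNReal.ofReal (3 * η * A.toReal) := (ENNReal.ofReal_mul (by positivity)).symm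
      _ < ENNReal.ofReal ε := by
          rw [ENNReal.ofReal_lt_ofReal_iff hε]
          have h1 : 3 * η * (A.toReal + 1) = ε := by
            rw [hη_def]; field_simp
          nlinarith [hη.le, ENNReal.toReal_nonneg (a := A)]
  -- equicontinuity modulus
  obtain ⟨δ, hδpos, hδ⟩ := translation_small hpq hφ hφsupp hφc hη
  -- a finite δ-net of C
  obtain ⟨net, hnet_sub, hcoverC⟩ :=
    hC.elim_nhds_subcover (fun y => ball y δ) (fun y _ => ball_mem_nhds y hδpos)
  -- the values of admissible convolutions at net points
  set V : (EuclideanSpace ℝ (Fin n) → ℝ) → (↥net → ℝ) := fun f i => ∫ t, φ t * f ((i : EuclideanSpace ℝ (Fin n)) - t) with hV_def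
  set S : Set (↥net → ℝ) := {w | ∃ f : EuclideanSpace ℝ (Fin n) → ℝ, MemLp f p volume ∧ (∀ x ∉ K, f x = 0) ∧
    eLpNorm f p volume ≤ 1 ∧ V f = w} with hS_def
  set M : ℝ := (eLpNorm φ q volume).toReal with hM_def
  have hS_sub : S ⊆ Set.pi Set.univ (fun _ : ↥net => Icc (-M) M) := by
    rintro w ⟨f, hfm, _, hf1, rfl⟩
    intro i _
    have h1 := conv_val_bound hpq hφ hfm (i : EuclideanSpace ℝ (Fin n))
    have h2 : (eLpNorm φ q volume * eLpNorm f p volume).toReal ≤ M := by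
      rw [hM_def]
      refine ENNReal.toReal_mono hφ.eLpNorm_ne_top ?_
      calc eLpNorm φ q volume * eLpNorm f p volume
          ≤ eLpNorm φ q volume * 1 := mul_le_mul' le_rfl hf1
        _ = eLpNorm φ q volume := mul_one _
    have := h1.trans h2
    rw [abs_le] at this
    exact ⟨this.1, this.2⟩
  have hTB : TotallyBounded S :=
    TotallyBounded.subset hS_sub (isCompact_univ_pi fun _ => isCompact_Icc).totallyBounded
  obtain ⟨T, hTS, hTfin, hTcover⟩ :=
    (totallyBounded_iff_subset.mp hTB) _ (dist_mem_uniformity hη)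
  -- choose representatives for each net element
  have hchoice : ∀ w : ↥net → ℝ, ∃ f : EuclideanSpace ℝ (Fin n) → ℝ, w ∈ T →
      (MemLp f p volume ∧ (∀ x ∉ K, f x = 0) ∧ eLpNorm f p volume ≤ 1 ∧ V f = w) := by
    intro w
    by_cases hw : w ∈ T
    · obtain ⟨f, hf⟩ := hTS hw
      exact ⟨f, fun _ => hf⟩
    · exact ⟨0, fun h => absurd h hw⟩
  choose F hF using hchoice
  refine ⟨hTfin.toFinset.image (fun w => fun x => ∫ t, φ t * F w (x - t)), ?_⟩
  intro f hfm hfK hf1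
  have hVfS : V f ∈ S := ⟨f, hfm, hfK, hf1, rfl⟩
  obtain ⟨w, hwT, hww⟩ := mem_iUnion₂.mp (hTcover hVfS)
  have hdistVw : dist (V f) w < η := hww
  obtain ⟨hFm, hFK, hF1, hFV⟩ := hF w hwT
  refine ⟨fun x => ∫ t, φ t * F w (x - t),
    Finset.mem_image_of_mem _ (hTfin.mem_toFinset.2 hwT), ?_⟩
  refine hfinal _ ?_ ?_
  · -- pointwise bound by 3η
    intro x
    simp only [Pi.sub_apply]
    by_cases hxC : x ∈ C
    · obtain ⟨y, hynet, hxy⟩ := mem_iUnion₂.mp (hcoverC hxC)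
      have hxy' : ‖x - y‖ < δ := by rwa [mem_ball, dist_eq_norm] at hxy
      have hyx' : ‖y - x‖ < δ := by rwa [norm_sub_rev] at hxy'
      set i : ↥net := ⟨y, hynet⟩ with hi_def
      have ht1 : |(∫ t, φ t * f (x - t)) - ∫ t, φ t * f (y - t)| ≤ η :=
        diff_le_eta hpq hφ hfm hf1 hη.le (hδ _ hxy')
      have ht3 : |(∫ t, φ t * F w (y - t)) - ∫ t, φ t * F w (x - t)| ≤ η :=
        diff_le_eta hpq hφ hFm hF1 hη.le (hδ _ hyx')
      have ht2 : |(∫ t, φ t * f (y - t)) - ∫ t, φ t * F w (y - t)| ≤ η := by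
        have h1 : (∫ t, φ t * f (y - t)) = V f i := rfl
        have h2 : (∫ t, φ t * F w (y - t)) = V (F w) i := rfl
        rw [h1, h2, hFV]
        have hle := dist_le_pi_dist (V f) w i
        rw [Real.dist_eq] at hle
        exact hle.trans hdistVw.le
      rw [Real.norm_eq_abs]
      have habc : |(∫ t, φ t * f (x - t)) - ∫ t, φ t * F w (x - t)|
          ≤ |(∫ t, φ t * f (x - t)) - ∫ t, φ t * f (y - t)|
            + |(∫ t, φ t * f (y - t)) - ∫ t, φ t * F w (y - t)|
            + |(∫ t, φ t * F w (y - t)) - ∫ t, φ t * F w (x - t)| := by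
        have := abs_sub_le (∫ t, φ t * f (x - t)) (∫ t, φ t * f (y - t))
          (∫ t, φ t * F w (x - t))
        have h2 := abs_sub_le (∫ t, φ t * f (y - t)) (∫ t, φ t * F w (y - t))
          (∫ t, φ t * F w (x - t))
        linarith
      linarith
    · rw [hsupp f hfK x hxC, hsupp (F w) hFK x hxC, sub_zero]
      simp only [norm_zero]
      positivity
  · intro x hxC
    simp only [Pi.sub_apply, hsupp f hfK x hxC, hsupp (F w) hFK x hxC, sub_zero]
end

section
/- (Mazur) Let G be a bounded subset of a Banach space X and let (U_k) be a sequence of compact operators on X converging to the identity in the strong operator topology (‖U_k x − x‖ → 0 for every x ∈ X). Then G is totally bounded if and only if ‖U_k x − x‖ → 0 uniformly for x ∈ G. -/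
open Filter

/-- Mazur's theorem: for a bounded subset `G` of a Banach space and a sequence of
compact operators `U_k` converging strongly to the identity, `G` is totally
bounded iff `‖U_k x − x‖ → 0` uniformly on `G`. -/
theorem mazur_totallyBounded_iff {X : Type*} [NormedAddCommGroup X] [NormedSpace ℝ X]
    [CompleteSpace X] (G : Set X) (hG : Bornology.IsBounded G)
    (U : ℕ → X →L[ℝ] X) (hU : ∀ k, IsCompactOperator (U k))
    (hconv : ∀ x : X, Tendsto (fun k => ‖U k x - x‖) atTop (nhds 0)) :
    TotallyBounded G ↔
      ∀ ε > (0 : ℝ), ∃ K : ℕ, ∀ k ≥ K, ∀ x ∈ G, ‖U k x - x‖ < ε := by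
  constructor
  · intro hTB ε hε
    -- Banach–Steinhaus: the norms ‖U k‖ are uniformly bounded
    obtain ⟨C, hC⟩ : ∃ C, ∀ k, ‖U k‖ ≤ C := by
      apply banach_steinhaus
      intro x
      have hb : BddAbove (Set.range fun k => ‖U k x - x‖) :=
        (hconv x).bddAbove_range
      obtain ⟨B, hB⟩ := hb
      refine ⟨B + ‖x‖, fun k => ?_⟩
      calc ‖U k x‖ ≤ ‖U k x - x‖ + ‖x‖ := by
            simpa using norm_add_le (U k x - x) x
        _ ≤ B + ‖x‖ := by
            have := hB (Set.mem_range_self (f := fun k => ‖U k x - x‖) k)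
            linarith
    have hC0 : 0 ≤ C := le_trans (norm_nonneg _) (hC 0)
    set δ : ℝ := ε / (3 * (C + 2)) with hδdef
    have hδ : 0 < δ := by positivity
    obtain ⟨t, htfin, ht⟩ := (Metric.totallyBounded_iff.mp hTB) δ hδ
    -- for each center, find a rank
    have hpt : ∀ y : X, ∃ N : ℕ, ∀ k ≥ N, ‖U k y - y‖ < ε / 3 := by
      intro y
      have := (hconv y).eventually (gt_mem_nhds (show (0:ℝ) < ε / 3 by positivity))
      exact this.exists_forall_of_atTop
    choose N hN using hpt
    obtain ⟨K, hK⟩ : ∃ K, ∀ y ∈ t, N y ≤ K := by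
      refine ⟨htfin.toFinset.sup N, fun y hy => ?_⟩
      exact Finset.le_sup (htfin.mem_toFinset.mpr hy)
    refine ⟨K, fun k hk x hx => ?_⟩
    obtain ⟨y, hy, hxy⟩ := Set.mem_iUnion₂.mp (ht hx)
    have hxy' : ‖x - y‖ < δ := by
      rwa [← dist_eq_norm, ← Metric.mem_ball]
    have h1 : ‖U k (x - y)‖ ≤ C * δ :=
      le_trans ((U k).le_opNorm _) (mul_le_mul (hC k) hxy'.le (norm_nonneg _) hC0)
    have h2 : ‖U k y - y‖ < ε / 3 := hN y k (le_trans (hK y hy) hk)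
    have key : U k x - x = U k (x - y) + (U k y - y) + (y - x) := by
      simp only [map_sub]; abel
    have hCδ : C * δ + δ ≤ 2 * ε / 3 := by
      have : (C + 2) * δ = ε / 3 := by
        field_simp [hδdef]
        rw [show (C + 2) * δ * 3 = 3 * (C + 2) * δ by ring, hδdef, mul_div_assoc']
        exact mul_div_cancel_left₀ ε (show (0:ℝ) < 3 * (C + 2) by linarith).ne'
      nlinarith
    calc ‖U k x - x‖ ≤ ‖U k (x - y)‖ + ‖U k y - y‖ + ‖y - x‖ := by
          rw [key]; exact norm_add₃_le
      _ < C * δ + ε / 3 + δ := by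
          have h3 : ‖y - x‖ < δ := by rwa [norm_sub_rev]
          linarith
      _ ≤ ε := by linarith
  · intro h
    rw [Metric.totallyBounded_iff]
    intro ε hε
    obtain ⟨K, hK⟩ := h (ε / 2) (by positivity)
    -- U K '' G is totally bounded
    have hTB : TotallyBounded ((U K) '' G) := by
      have := ((hU K).isCompact_closure_image_of_bounded
        (f := (U K : X →ₗ[ℝ] X)) hG).totallyBounded
      exact this.subset subset_closure
    obtain ⟨t, htfin, ht⟩ := (Metric.totallyBounded_iff.mp hTB) (ε / 2) (by positivity)
    refine ⟨t, htfin, fun x hx => ?_⟩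
    obtain ⟨y, hy, hxy⟩ := Set.mem_iUnion₂.mp (ht (Set.mem_image_of_mem _ hx))
    refine Set.mem_iUnion₂.mpr ⟨y, hy, ?_⟩
    rw [Metric.mem_ball] at hxy ⊢
    have h1 : dist x (U K x) < ε / 2 := by
      rw [dist_comm, dist_eq_norm]
      exact hK K le_rfl x hx
    calc dist x y ≤ dist x (U K x) + dist (U K x) y := dist_triangle _ _ _
      _ < ε / 2 + ε / 2 := add_lt_add h1 hxy
      _ = ε := by ring
end

section
/- Let 1 ≤ p < ∞ and F ⊆ L^p(ℝ^n) be totally bounded. Then for every ε > 0 there is ρ > 0 such that ‖T_y f − f‖_p < ε for all f ∈ F and all y with |y| < ρ, and there exists R > 0 such that ∫_{|x|>R}|f|^p dx < ε^p for all f ∈ F. -/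
set_option maxHeartbeats 1000000
open MeasureTheory Metric Set Filter
open scoped ENNReal Topology

lemma kr_conv {α : Type*} [MeasurableSpace α] {μ : Measure α} {p : ℝ} (hp : 1 ≤ p)
    {h : α → ℝ} (hh : MemLp h (ENNReal.ofReal p) μ) {ε : ℝ} (hε : 0 < ε) :
    (∫ x, |h x| ^ p ∂μ) < ε ^ p ↔ eLpNorm h (ENNReal.ofReal p) μ < ENNReal.ofReal ε := by
  have hp0 : 0 < p := lt_of_lt_of_le one_pos hp
  have hq0 : ENNReal.ofReal p ≠ 0 := by simp [ENNReal.ofReal_eq_zero, not_le, hp0]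
  have hqt : ENNReal.ofReal p ≠ ∞ := ENNReal.ofReal_ne_top
  rw [hh.eLpNorm_eq_integral_rpow_norm hq0 hqt, ENNReal.ofReal_lt_ofReal_iff hε]
  rw [ENNReal.toReal_ofReal hp0.le]
  have hI : 0 ≤ ∫ x, ‖h x‖ ^ p ∂μ := by
    refine integral_nonneg fun x => Real.rpow_nonneg (norm_nonneg _) _
  rw [show (fun x => |h x| ^ p) = fun x => ‖h x‖ ^ p by simp [Real.norm_eq_abs]]
  rw [← Real.rpow_lt_rpow_iff (Real.rpow_nonneg hI _) hε.le hp0,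
    Real.rpow_inv_rpow hI hp0.ne']

lemma kr_translate {n : ℕ} {q : ℝ≥0∞} (hq1 : 1 ≤ q) (hqt : q ≠ ∞)
    {g : EuclideanSpace ℝ (Fin n) → ℝ} (hg : MemLp g q volume) {c : ℝ≥0∞} (hc : 0 < c) :
    ∀ᶠ y in 𝓝 (0 : EuclideanSpace ℝ (Fin n)),
      eLpNorm (fun x => g (x - y) - g x) q volume < c := by
  haveI : Fact (1 ≤ q) := ⟨hq1⟩
  let Tc : C(EuclideanSpace ℝ (Fin n), C(EuclideanSpace ℝ (Fin n), EuclideanSpace ℝ (Fin n))) :=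
    ContinuousMap.curry ⟨fun p => p.2 - p.1, by fun_prop⟩
  have hTm : ∀ y, MeasurePreserving (Tc y) volume volume := fun y =>
    measurePreserving_sub_right volume y
  let gL : Lp ℝ q volume := hg.toLp g
  let C : EuclideanSpace ℝ (Fin n) → Lp ℝ q volume :=
    fun y => Lp.compMeasurePreserving (Tc y) (hTm y) gL
  have cont : Continuous C := continuous_const.compMeasurePreservingLp Tc.continuous hTm hqt
  have h1 : ∀ y, (C y : EuclideanSpace ℝ (Fin n) → ℝ) =ᵐ[volume] fun x => g (x - y) :=
    fun y => (Lp.coeFn_compMeasurePreserving gL (hTm y)).trans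
      ((hTm y).quasiMeasurePreserving.ae_eq_comp (f := Tc y) hg.coeFn_toLp)
  have key : ∀ y, eLpNorm (fun x => g (x - y) - g x) q volume = edist (C y) (C 0) := by
    intro y
    rw [Lp.edist_def]
    refine eLpNorm_congr_ae ?_
    filter_upwards [h1 y, h1 0] with x hx1 hx0
    rw [Pi.sub_apply, hx1, hx0]
    simp
  have hev : ∀ᶠ y in 𝓝 (0 : EuclideanSpace ℝ (Fin n)), edist (C y) (C 0) < c :=
    EMetric.tendsto_nhds.mp (cont.tendsto 0) c hc
  filter_upwards [hev] with y hy
  rw [key y]; exact hy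

lemma kr_decay {n : ℕ} {q : ℝ≥0∞} (hq0 : q ≠ 0) (hqt : q ≠ ∞)
    {g : EuclideanSpace ℝ (Fin n) → ℝ} (hg : MemLp g q volume) {c : ℝ≥0∞} (hc : 0 < c) (hctop : c ≠ ∞) :
    ∃ R > (0 : ℝ), eLpNorm g q (volume.restrict {x : EuclideanSpace ℝ (Fin n) | R < ‖x‖}) < c := by
  set p := q.toReal with hp
  have hp0 : 0 < p := ENNReal.toReal_pos hq0 hqt
  have hmeas : ∀ R : ℝ, MeasurableSet {x : EuclideanSpace ℝ (Fin n) | R < ‖x‖} :=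
    fun R => (isOpen_lt continuous_const continuous_norm).measurableSet
  have hAE : AEMeasurable (fun x => (‖g x‖₊ : ℝ≥0∞) ^ p) volume := hg.1.enorm.pow_const _
  have hfin : (∫⁻ x, (‖g x‖₊ : ℝ≥0∞) ^ p ∂volume) ≠ ∞ :=
    ((eLpNorm_lt_top_iff_lintegral_rpow_enorm_lt_top hq0 hqt).1 hg.2).ne
  have htend : Tendsto
      (fun k : ℕ => ∫⁻ x, ({x : EuclideanSpace ℝ (Fin n) | (k : ℝ) < ‖x‖}.indicator
        (fun x => (‖g x‖₊ : ℝ≥0∞) ^ p)) x ∂volume) atTop (𝓝 (∫⁻ _ : EuclideanSpace ℝ (Fin n), 0 ∂volume)) := by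
    refine tendsto_lintegral_of_dominated_convergence' (fun x => (‖g x‖₊ : ℝ≥0∞) ^ p)
      (fun k => hAE.indicator (hmeas _))
      (fun k => Filter.Eventually.of_forall fun x => Set.indicator_le_self _ _ x) hfin ?_
    · refine Filter.Eventually.of_forall fun x => ?_
      refine tendsto_nhds_of_eventually_eq ?_
      filter_upwards [eventually_ge_atTop ⌈‖x‖⌉₊] with k hk
      exact Set.indicator_of_notMem (by simpa using not_lt.2 ((Nat.ceil_le).1 hk)) _
  rw [lintegral_zero] at htend
  have hcp : (0 : ℝ≥0∞) < c ^ p := ENNReal.rpow_pos hc hctop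
  obtain ⟨k, hk⟩ := (htend.eventually (gt_mem_nhds hcp)).exists
  refine ⟨max k 1, lt_of_lt_of_le one_pos (le_max_right _ _), ?_⟩
  rw [eLpNorm_eq_lintegral_rpow_enorm_toReal hq0 hqt, one_div, ENNReal.rpow_inv_lt_iff hp0]
  calc ∫⁻ x in {x : EuclideanSpace ℝ (Fin n) | (max (k:ℝ) 1) < ‖x‖}, (‖g x‖₊ : ℝ≥0∞) ^ p ∂volume
      ≤ ∫⁻ x in {x : EuclideanSpace ℝ (Fin n) | (k : ℝ) < ‖x‖}, (‖g x‖₊ : ℝ≥0∞) ^ p ∂volume := by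
        refine lintegral_mono_set fun x hx => lt_of_le_of_lt (le_max_left _ _) (Set.mem_setOf_eq ▸ hx)
    _ = ∫⁻ x, ({x : EuclideanSpace ℝ (Fin n) | (k : ℝ) < ‖x‖}.indicator
          (fun x => (‖g x‖₊ : ℝ≥0∞) ^ p)) x ∂volume := (lintegral_indicator (hmeas _) _).symm
    _ < c ^ p := hk

/-- Necessity in the Kolmogorov–Riesz theorem: a totally bounded family in
`L^p(ℝⁿ)` (expressed via finite `ε`-nets for the `L^p` metric) is uniformly
`L^p`-equicontinuous under translation and has uniform decay at infinity. -/
theorem kolmogorov_riesz_necessity {n : ℕ} (p : ℝ) (hp : 1 ≤ p)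
    (F : Set (EuclideanSpace ℝ (Fin n) → ℝ))
    (hF : ∀ f ∈ F, MemLp f (ENNReal.ofReal p) volume)
    (htb : ∀ ε > (0 : ℝ), ∃ G : Finset (EuclideanSpace ℝ (Fin n) → ℝ),
      (∀ g ∈ G, MemLp g (ENNReal.ofReal p) volume) ∧ ∀ f ∈ F,
        ∃ g ∈ G, ∫ x, |f x - g x| ^ p < ε ^ p) :
    ∀ ε > (0 : ℝ),
      (∃ ρ > (0 : ℝ), ∀ f ∈ F, ∀ y : EuclideanSpace ℝ (Fin n), ‖y‖ < ρ →
        ∫ x, |f (x - y) - f x| ^ p < ε ^ p) ∧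
      (∃ R > (0 : ℝ), ∀ f ∈ F,
        ∫ x in {x : EuclideanSpace ℝ (Fin n) | R < ‖x‖}, |f x| ^ p < ε ^ p) := by
  have hp0 : 0 < p := lt_of_lt_of_le one_pos hp
  set q := ENNReal.ofReal p with hqdef
  have hq1 : 1 ≤ q := by rw [hqdef, ← ENNReal.ofReal_one]; exact ENNReal.ofReal_le_ofReal hp
  have hq0 : q ≠ 0 := by simp [hqdef, ENNReal.ofReal_eq_zero, not_le, hp0]
  have hqt : q ≠ ∞ := ENNReal.ofReal_ne_top
  intro ε hε
  constructor
  · -- translation part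
    set δ := ε / 3 with hδdef
    have hδ : 0 < δ := by positivity
    obtain ⟨G, hG, hnet⟩ := htb δ hδ
    have hev : ∀ᶠ y in 𝓝 (0 : EuclideanSpace ℝ (Fin n)), ∀ g ∈ G,
        eLpNorm (fun x => g (x - y) - g x) q volume < ENNReal.ofReal δ := by
      rw [Filter.eventually_all_finset]
      exact fun g hg => kr_translate hq1 hqt (hG g hg) (ENNReal.ofReal_pos.2 hδ)
    obtain ⟨ρ, hρ, hball⟩ := Metric.eventually_nhds_iff.mp hev
    refine ⟨ρ, hρ, fun f hf y hy => ?_⟩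
    have hmem : dist y (0 : EuclideanSpace ℝ (Fin n)) < ρ := by
      simpa [dist_zero_right] using hy
    obtain ⟨g, hgG, hfg⟩ := hnet f hf
    have hfM := hF f hf
    have hgM := hG g hgG
    have hfgM : MemLp (f - g) q volume := hfM.sub hgM
    have e1 : eLpNorm (f - g) q volume < ENNReal.ofReal δ := (kr_conv hp hfgM hδ).1 hfg
    have e2 := hball hmem g hgG
    have msr := measurePreserving_sub_right
      (volume : Measure (EuclideanSpace ℝ (Fin n))) y
    have htr : MemLp (fun x => f (x - y)) q volume := hfM.comp_measurePreserving msr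
    have htrg : MemLp (fun x => g (x - y)) q volume := hgM.comp_measurePreserving msr
    have target : MemLp (fun x => f (x - y) - f x) q volume := htr.sub hfM
    rw [kr_conv hp target hε]
    have hA : eLpNorm (fun x => f (x - y) - g (x - y)) q volume = eLpNorm (f - g) q volume := by
      have h := eLpNorm_comp_measurePreserving (p := q) hfgM.1 msr
      rw [show ((f - g) ∘ fun x => x - y) = fun x => f (x - y) - g (x - y) from rfl] at h
      exact h
    have hC : eLpNorm (fun x => g x - f x) q volume = eLpNorm (f - g) q volume := by
      rw [show (fun x => g x - f x) = -(f - g) by funext x; simp]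
      exact eLpNorm_neg (f - g) q volume
    have mA : AEStronglyMeasurable (fun x => f (x - y) - g (x - y)) volume := (htr.sub htrg).1
    have mB : AEStronglyMeasurable (fun x => g (x - y) - g x) volume := (htrg.sub hgM).1
    have mC : AEStronglyMeasurable (fun x => g x - f x) volume := (hgM.sub hfM).1
    have heq : (fun x => f (x - y) - f x) =
        (fun x => f (x - y) - g (x - y)) + ((fun x => g (x - y) - g x) + fun x => g x - f x) := by
      funext x; simp only [Pi.add_apply]; ring
    calc eLpNorm (fun x => f (x - y) - f x) q volume
        = eLpNorm ((fun x => f (x - y) - g (x - y)) +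
            ((fun x => g (x - y) - g x) + fun x => g x - f x)) q volume := by rw [← heq]
      _ ≤ eLpNorm (fun x => f (x - y) - g (x - y)) q volume +
            eLpNorm ((fun x => g (x - y) - g x) + fun x => g x - f x) q volume :=
          eLpNorm_add_le mA (mB.add mC) hq1
      _ ≤ eLpNorm (fun x => f (x - y) - g (x - y)) q volume +
            (eLpNorm (fun x => g (x - y) - g x) q volume +
              eLpNorm (fun x => g x - f x) q volume) :=
          add_le_add_right (eLpNorm_add_le mB mC hq1) _
      _ < ENNReal.ofReal δ + (ENNReal.ofReal δ + ENNReal.ofReal δ) := by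
          refine ENNReal.add_lt_add ?_ (ENNReal.add_lt_add e2 ?_)
          · rw [hA]; exact e1
          · rw [hC]; exact e1
      _ = ENNReal.ofReal ε := by
          rw [← ENNReal.ofReal_add hδ.le hδ.le,
            ← ENNReal.ofReal_add hδ.le (by positivity : (0:ℝ) ≤ δ + δ)]
          congr 1
          rw [hδdef]; ring
  · -- decay part
    set δ := ε / 2 with hδdef
    have hδ : 0 < δ := by positivity
    obtain ⟨G, hG, hnet⟩ := htb δ hδ
    have hdec : ∀ g ∈ G, ∃ R, 0 < R ∧
        eLpNorm g q (volume.restrict {x : EuclideanSpace ℝ (Fin n) | R < ‖x‖}) < ENNReal.ofReal δ := by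
      intro g hg
      obtain ⟨R, hR, h⟩ := kr_decay hq0 hqt (hG g hg) (ENNReal.ofReal_pos.2 hδ) ENNReal.ofReal_ne_top
      exact ⟨R, hR, h⟩
    choose! r hr1 hr2 using hdec
    set N : ℕ := G.sup fun g => ⌈r g⌉₊ with hN
    refine ⟨(N : ℝ) + 1, by positivity, fun f hf => ?_⟩
    obtain ⟨g, hgG, hfg⟩ := hnet f hf
    have hfM := hF f hf
    have hgM := hG g hgG
    have hfgM : MemLp (f - g) q volume := hfM.sub hgM
    have e1 : eLpNorm (f - g) q volume < ENNReal.ofReal δ := (kr_conv hp hfgM hδ).1 hfg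
    have hrg : r g ≤ (N : ℝ) + 1 := by
      calc r g ≤ (⌈r g⌉₊ : ℝ) := Nat.le_ceil _
        _ ≤ (N : ℝ) := by exact_mod_cast Finset.le_sup (f := fun g => ⌈r g⌉₊) hgG
        _ ≤ (N : ℝ) + 1 := by linarith
    have hsub : {x : EuclideanSpace ℝ (Fin n) | (N : ℝ) + 1 < ‖x‖} ⊆
        {x : EuclideanSpace ℝ (Fin n) | r g < ‖x‖} :=
      fun x hx => lt_of_le_of_lt hrg hx
    set S := {x : EuclideanSpace ℝ (Fin n) | (N : ℝ) + 1 < ‖x‖} with hS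
    have e2 : eLpNorm g q (volume.restrict S) < ENNReal.ofReal δ :=
      lt_of_le_of_lt (eLpNorm_mono_measure _ (Measure.restrict_mono hsub le_rfl)) (hr2 g hgG)
    have e1' : eLpNorm (f - g) q (volume.restrict S) < ENNReal.ofReal δ :=
      lt_of_le_of_lt (eLpNorm_mono_measure _ Measure.restrict_le_self) e1
    rw [kr_conv hp (hfM.restrict S) hε]
    have heq : f = (f - g) + g := by funext x; simp
    calc eLpNorm f q (volume.restrict S)
        = eLpNorm ((f - g) + g) q (volume.restrict S) := by rw [← heq]
      _ ≤ eLpNorm (f - g) q (volume.restrict S) + eLpNorm g q (volume.restrict S) :=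
          eLpNorm_add_le (hfgM.restrict S).1 (hgM.restrict S).1 hq1
      _ < ENNReal.ofReal δ + ENNReal.ofReal δ := ENNReal.add_lt_add e1' e2
      _ = ENNReal.ofReal ε := by
          rw [← ENNReal.ofReal_add hδ.le hδ.le]
          norm_num [hδdef]
end
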